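/- Suppose that 𝒜 ⊆ [ω]^ω has cardinality less than 𝔟, that {Bᵢ : i ∈ ω} ⊆ [ω]^ω, and that A ∩ Bᵢ is finite for every A ∈ 𝒜 and every i ∈ ω. Then there exists X ⊆ ω such that A ⊆* ω \ X for every A ∈ 𝒜 and Bᵢ ⊆* X for every i ∈ ω (i.e., there are no (ω, <𝔟)-gaps). -/

import Mathlib

open Filter Set

/-- `f ≤* g`: eventual domination. -/
def EvLE (f g : ℕ → ℕ) : Prop := ∀ᶠ n in Filter.atTop, f n ≤ g n

/-- The bounding number `𝔟`: least cardinality of an `≤*`-unbounded family. -/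
noncomputable def bNumber : Cardinal :=
  sInf { c | ∃ F : Set (ℕ → ℕ), Cardinal.mk F = c ∧ ¬ ∃ g : ℕ → ℕ, ∀ f ∈ F, EvLE f g }

/-- There are no `(ω, <𝔟)`-gaps. -/
theorem no_omega_lt_b_gaps (𝒜 : Set (Set ℕ)) (B : ℕ → Set ℕ)
    (h𝒜inf : ∀ A ∈ 𝒜, A.Infinite) (hcard : Cardinal.mk 𝒜 < bNumber)
    (hBinf : ∀ i, (B i).Infinite)
    (hfin : ∀ A ∈ 𝒜, ∀ i, (A ∩ B i).Finite) :
    ∃ X : Set ℕ, (∀ A ∈ 𝒜, (A \ (Set.univ \ X)).Finite) ∧ ∀ i, (B i \ X).Finite := by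
  classical
  set f : Set ℕ → ℕ → ℕ := fun A n => sSup (⋃ i ∈ Finset.range (n+1), A ∩ B i) with hf
  have hbound : ∀ A ∈ 𝒜, ∀ n, ∀ i ≤ n, ∀ x ∈ A ∩ B i, x ≤ f A n := by
    intro A hA n i hi x hx
    apply le_csSup
    · apply Set.Finite.bddAbove
      refine Set.Finite.subset ((Finset.finite_toSet (Finset.range (n+1))).biUnion (fun i _ => hfin A hA i)) ?_
      intro y hy; simpa using hy
    · exact Set.mem_biUnion (Finset.mem_range.mpr (Nat.lt_succ_of_le hi)) hx
  obtain ⟨g, hg⟩ : ∃ g : ℕ → ℕ, ∀ h ∈ f '' 𝒜, EvLE h g := by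
    by_contra hcon
    have h1 : bNumber ≤ Cardinal.mk (f '' 𝒜) := csInf_le' ⟨f '' 𝒜, rfl, hcon⟩
    have h2 : Cardinal.mk (f '' 𝒜) ≤ Cardinal.mk 𝒜 := Cardinal.mk_image_le
    exact absurd hcard (not_lt.2 (h1.trans h2))
  refine ⟨⋃ i, {x ∈ B i | g i < x}, ?_, ?_⟩
  · intro A hA
    have hEv : EvLE (f A) g := hg _ ⟨A, hA, rfl⟩
    obtain ⟨n₀, hn₀⟩ := Filter.eventually_atTop.1 hEv
    have hsub : A \ (Set.univ \ ⋃ i, {x ∈ B i | g i < x}) ⊆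
        ⋃ i ∈ Finset.range n₀, A ∩ B i := by
      intro x hx
      obtain ⟨hxA, hx2⟩ := hx
      have hxX : x ∈ ⋃ i, {x ∈ B i | g i < x} := by
        by_contra h; exact hx2 ⟨trivial, h⟩
      obtain ⟨i, hxB, hgi⟩ := Set.mem_iUnion.1 hxX
      by_cases hi : i < n₀
      · exact Set.mem_biUnion (Finset.mem_range.mpr hi) ⟨hxA, hxB⟩
      · exfalso
        have h3 : x ≤ f A i := hbound A hA i i le_rfl x ⟨hxA, hxB⟩
        have h4 : x ≤ g i := h3.trans (hn₀ i (le_of_not_gt hi))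
        omega
    exact ((Set.Finite.biUnion (Finset.finite_toSet (Finset.range n₀))
      (fun i _ => hfin A hA i))).subset (fun y hy => by simpa using hsub hy)
  · intro i
    have hsub : B i \ (⋃ j, {x ∈ B j | g j < x}) ⊆ {x | x ≤ g i} := by
      intro x hx
      obtain ⟨hxB, hxn⟩ := hx
      by_contra h
      rw [Set.mem_setOf_eq] at h
      push_neg at h
      exact hxn (Set.mem_iUnion.2 ⟨i, hxB, h⟩)
    exact (Set.finite_le_nat (g i)).subset hsub
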